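/- Let ρ, σ be density matrices with mutually orthogonal supports, and let ω = t ρ + (1 − t) ν for some t ∈ (0,1) and density matrix ν, with ω positive definite. Then D(ρ‖ω) − D(σ‖ω) ≤ log(1/t − 1). -/

import Mathlib

open Matrix BigOperators
open scoped ComplexOrder

noncomputable section

/-- `η(x) = -x log x` (with `log 0 = 0` convention). -/
def eta (x : ℝ) : ℝ := -(x * Real.log x)

/-- Shannon entropy of a (non-negative) vector. -/
def shannonH {n : ℕ} (p : Fin n → ℝ) : ℝ := ∑ i, eta (p i)

/-- Binary entropy `h(ε) = -ε log ε - (1-ε) log(1-ε)`. -/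
def binEnt (x : ℝ) : ℝ := -(x * Real.log x) - ((1 - x) * Real.log (1 - x))

/-- Eigenvalues of a Hermitian matrix in non-decreasing order. -/
def eigUp {d : ℕ} (A : Matrix (Fin d) (Fin d) ℂ) (hA : A.IsHermitian) : Fin d → ℝ :=
  hA.eigenvalues ∘ Tuple.sort hA.eigenvalues

/-- Eigenvalues of a Hermitian matrix in non-increasing order. -/
def eigDown {d : ℕ} (A : Matrix (Fin d) (Fin d) ℂ) (hA : A.IsHermitian) : Fin d → ℝ :=
  fun i => eigUp A hA i.rev

/-- Entries of a vector rearranged in non-increasing order. -/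
def sortDown {n : ℕ} (x : Fin n → ℝ) : Fin n → ℝ :=
  fun i => (x ∘ Tuple.sort x) i.rev

/-- `Majorizes y x` : the vector `x` is majorized by the vector `y`. -/
def Majorizes {n : ℕ} (y x : Fin n → ℝ) : Prop :=
  (∀ k : ℕ, ∑ j ∈ Finset.univ.filter (fun j : Fin n => (j : ℕ) < k), sortDown x j ≤
            ∑ j ∈ Finset.univ.filter (fun j : Fin n => (j : ℕ) < k), sortDown y j) ∧
  ∑ j, x j = ∑ j, y j

/-- Von Neumann entropy `S(A) = -Tr(A log A)` expressed via eigenvalues. -/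
def vnEntropy {n : Type*} [Fintype n] [DecidableEq n] (A : Matrix n n ℂ) : ℝ :=
  if hA : A.IsHermitian then ∑ i, eta (hA.eigenvalues i) else 0

/-- Trace norm of a Hermitian matrix: sum of absolute values of eigenvalues. -/
def traceNorm {n : Type*} [Fintype n] [DecidableEq n] (A : Matrix n n ℂ) : ℝ :=
  if hA : A.IsHermitian then ∑ i, |hA.eigenvalues i| else 0

/-- A density matrix: positive semi-definite with unit trace. -/
def IsDensity {n : Type*} [Fintype n] [DecidableEq n] (ρ : Matrix n n ℂ) : Prop :=
  ρ.PosSemidef ∧ ρ.trace = 1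

/-- Matrix logarithm via the spectral decomposition (with `log 0 = 0` convention). -/
def mlog {n : Type*} [Fintype n] [DecidableEq n] (A : Matrix n n ℂ) : Matrix n n ℂ :=
  if hA : A.IsHermitian then
    (hA.eigenvectorUnitary : Matrix n n ℂ)
      * Matrix.diagonal (fun i => (Real.log (hA.eigenvalues i) : ℂ))
      * (star (hA.eigenvectorUnitary : Matrix n n ℂ))
  else 0

/-- Umegaki relative entropy `D(ρ‖σ) = Tr(ρ (log ρ - log σ))`. -/
def relEnt {n : Type*} [Fintype n] [DecidableEq n] (ρ σ : Matrix n n ℂ) : ℝ :=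
  ((ρ * (mlog ρ - mlog σ)).trace).re

/-- Max-relative entropy `D_max(ρ‖σ) = inf {λ > 0 : ρ ≤ e^λ σ}`. -/
def dMax {n : Type*} [Fintype n] [DecidableEq n] (ρ σ : Matrix n n ℂ) : ℝ :=
  sInf {l : ℝ | 0 < l ∧ (Real.exp l • σ - ρ).PosSemidef}

/-- Partial trace over the first tensor factor. -/
def ptraceA {dA dB : ℕ} (ρ : Matrix (Fin dA × Fin dB) (Fin dA × Fin dB) ℂ) :
    Matrix (Fin dB) (Fin dB) ℂ :=
  Matrix.of fun i j => ∑ a, ρ (a, i) (a, j)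

/-- Conditional entropy `S(A|B)_ρ = S(ρ_{AB}) - S(ρ_B)`. -/
def condEnt {dA dB : ℕ} (ρ : Matrix (Fin dA × Fin dB) (Fin dA × Fin dB) ℂ) : ℝ :=
  vnEntropy ρ - vnEntropy (ptraceA ρ)

section Aux

variable {n : Type*} [Fintype n] [DecidableEq n]

lemma log_jensen {ι : Type*} (s : Finset ι) (w x : ι → ℝ)
    (hw : ∀ i ∈ s, 0 ≤ w i) (hx : ∀ i ∈ s, 0 < x i) (hsum : ∑ i ∈ s, w i = 1) :
    ∑ i ∈ s, w i * Real.log (x i) ≤ Real.log (∑ i ∈ s, w i * x i) :=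
  strictConcaveOn_log_Ioi.concaveOn.le_map_sum hw hsum hx

variable {n : Type*} [Fintype n] [DecidableEq n]

lemma trace_mul_mlog {A B : Matrix n n ℂ} (hA : A.IsHermitian) (hB : B.IsHermitian) :
    ((A * mlog B).trace).re =
      ∑ i, ∑ j, hA.eigenvalues i *
        (‖((star (hA.eigenvectorUnitary : Matrix n n ℂ) *
            (hB.eigenvectorUnitary : Matrix n n ℂ)) i j)‖ ^ 2 * Real.log (hB.eigenvalues j)) := by
  set U := (hA.eigenvectorUnitary : Matrix n n ℂ) with hU
  set V := (hB.eigenvectorUnitary : Matrix n n ℂ) with hV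
  set W := star U * V with hW
  set D : Matrix n n ℂ := Matrix.diagonal (RCLike.ofReal ∘ hA.eigenvalues) with hD
  set L := Matrix.diagonal (fun i => (Real.log (hB.eigenvalues i) : ℂ)) with hL
  have hUsU : star U * U = 1 := by
    rw [hU]; exact (Matrix.mem_unitaryGroup_iff').mp hA.eigenvectorUnitary.2
  have hUUs : U * star U = 1 := by
    rw [hU]; exact (Matrix.mem_unitaryGroup_iff).mp hA.eigenvectorUnitary.2
  have e1 : star W * star U = star V := by
    rw [hW, Matrix.star_mul, star_star, Matrix.mul_assoc, hUUs, Matrix.mul_one]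
  have h1 : A * mlog B = U * (D * (W * (L * star W)) * star U) := by
    nth_rewrite 1 [hA.spectral_theorem, Unitary.conjStarAlgAut_apply]
    rw [mlog, dif_pos hB]
    simp only [Matrix.mul_assoc, ← hU, ← hV, ← hD, ← hL]
    rw [e1, hW, Matrix.mul_assoc]
  have h2 : (A * mlog B).trace = (D * (W * (L * star W))).trace := by
    rw [h1, Matrix.trace_mul_comm, Matrix.mul_assoc, hUsU, Matrix.mul_one]
  rw [h2, Matrix.trace, Complex.re_sum]
  apply Finset.sum_congr rfl
  intro i _
  rw [Matrix.diag_apply, Matrix.diagonal_mul, Matrix.mul_apply, Finset.mul_sum, Complex.re_sum]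
  apply Finset.sum_congr rfl
  intro j _
  rw [Matrix.diagonal_mul, Matrix.star_apply]
  have hz : W i j * star (W i j) = ((‖W i j‖ ^ 2 : ℝ) : ℂ) := by
    rw [Complex.star_def, Complex.mul_conj, Complex.normSq_eq_norm_sq]
  rw [show W i j * ((Real.log (hB.eigenvalues j) : ℂ) * star (W i j))
      = (Real.log (hB.eigenvalues j) : ℂ) * (W i j * star (W i j)) from by ring, hz]
  simp only [Function.comp_apply]
  rw [show (RCLike.ofReal (hA.eigenvalues i) : ℂ) = ((hA.eigenvalues i : ℝ) : ℂ) from rfl]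
  simp only [← Complex.ofReal_mul, Complex.ofReal_re]
  ring

lemma trace_mul_mlog_self {A : Matrix n n ℂ} (hA : A.IsHermitian) :
    ((A * mlog A).trace).re = ∑ i, hA.eigenvalues i * Real.log (hA.eigenvalues i) := by
  rw [trace_mul_mlog hA hA,
    show star (hA.eigenvectorUnitary : Matrix n n ℂ) * (hA.eigenvectorUnitary : Matrix n n ℂ) = 1
      from (Matrix.mem_unitaryGroup_iff').mp hA.eigenvectorUnitary.2]
  apply Finset.sum_congr rfl
  intro i _
  rw [Finset.sum_eq_single i]
  · simp [Matrix.one_apply]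
  · intro j _ hj
    simp [Matrix.one_apply, Ne.symm hj]
  · simp

lemma quadform_spectral {A : Matrix n n ℂ} (hA : A.IsHermitian) (x : n → ℂ) :
    (dotProduct (star x) (A *ᵥ x)).re =
      ∑ i, hA.eigenvalues i * ‖((star (hA.eigenvectorUnitary : Matrix n n ℂ)) *ᵥ x) i‖ ^ 2 := by
  set U := (hA.eigenvectorUnitary : Matrix n n ℂ) with hU
  set y := (star U) *ᵥ x with hy
  have h1 : A *ᵥ x = U *ᵥ ((Matrix.diagonal (RCLike.ofReal ∘ hA.eigenvalues)) *ᵥ y) := by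
    nth_rewrite 1 [hA.spectral_theorem, Unitary.conjStarAlgAut_apply]
    rw [← Matrix.mulVec_mulVec, ← Matrix.mulVec_mulVec]
  have h2 : dotProduct (star x) (A *ᵥ x)
      = dotProduct (star y) ((Matrix.diagonal (RCLike.ofReal ∘ hA.eigenvalues)) *ᵥ y) := by
    rw [h1, Matrix.dotProduct_mulVec, show star x ᵥ* U = star y from ?_]
    · rw [hy, Matrix.star_mulVec, Matrix.star_eq_conjTranspose, Matrix.conjTranspose_conjTranspose]
    
  rw [h2, dotProduct, Complex.re_sum]
  apply Finset.sum_congr rfl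
  intro i _
  rw [Matrix.mulVec_diagonal, Pi.star_apply]
  have : star (y i) * ((RCLike.ofReal ∘ hA.eigenvalues) i * y i)
      = ((hA.eigenvalues i * ‖y i‖ ^ 2 : ℝ) : ℂ) := by
    simp only [Function.comp_apply]
    rw [show (RCLike.ofReal (hA.eigenvalues i) : ℂ) = ((hA.eigenvalues i : ℝ) : ℂ) from rfl]
    rw [show star (y i) * (((hA.eigenvalues i : ℝ) : ℂ) * y i)
        = ((hA.eigenvalues i : ℝ) : ℂ) * (y i * star (y i)) from by ring]
    rw [Complex.star_def, Complex.mul_conj, Complex.normSq_eq_norm_sq]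
    rw [← Complex.ofReal_mul]
  rw [this, Complex.ofReal_re]

lemma trace_eq_sum_eigenvalues {A : Matrix n n ℂ} (hA : A.IsHermitian) :
    A.trace = ((∑ i, hA.eigenvalues i : ℝ) : ℂ) := by
  have hUsU : star (hA.eigenvectorUnitary : Matrix n n ℂ) * (hA.eigenvectorUnitary : Matrix n n ℂ) = 1 :=
    (Matrix.mem_unitaryGroup_iff').mp hA.eigenvectorUnitary.2
  nth_rewrite 1 [hA.spectral_theorem, Unitary.conjStarAlgAut_apply]
  rw [Matrix.trace_mul_cycle, hUsU, Matrix.one_mul, Matrix.trace_diagonal]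
  simp [Complex.ofReal_sum]

lemma unitary_prod_row_sum {A B : Matrix n n ℂ} (hA : A.IsHermitian) (hB : B.IsHermitian) (i : n) :
    ∑ j, ‖((star (hA.eigenvectorUnitary : Matrix n n ℂ) *
        (hB.eigenvectorUnitary : Matrix n n ℂ)) i j)‖ ^ 2 = 1 := by
  set U := (hA.eigenvectorUnitary : Matrix n n ℂ) with hU
  set V := (hB.eigenvectorUnitary : Matrix n n ℂ) with hV
  set W := star U * V with hW
  have hWW : W * star W = 1 := by
    rw [hW, Matrix.star_mul, star_star, Matrix.mul_assoc, ← Matrix.mul_assoc V,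
      show V * star V = 1 from (Matrix.mem_unitaryGroup_iff).mp hB.eigenvectorUnitary.2,
      Matrix.one_mul,
      show star U * U = 1 from (Matrix.mem_unitaryGroup_iff').mp hA.eigenvectorUnitary.2]
  have h1 : (W * star W) i i = 1 := by rw [hWW, Matrix.one_apply_eq]
  rw [Matrix.mul_apply] at h1
  have h2 : ∀ j, W i j * star W j i = ((‖W i j‖ ^ 2 : ℝ) : ℂ) := by
    intro j
    rw [Matrix.star_apply, Complex.star_def, Complex.mul_conj, Complex.normSq_eq_norm_sq]
  rw [Finset.sum_congr rfl (fun j _ => h2 j), ← Complex.ofReal_sum] at h1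
  exact_mod_cast h1

lemma sum_quadform_eigenbasis {A B : Matrix n n ℂ} (hB : B.IsHermitian) :
    ∑ i, dotProduct (star (hB.eigenvectorBasis i : n → ℂ)) (A *ᵥ (hB.eigenvectorBasis i : n → ℂ))
      = A.trace := by
  set F := (hB.eigenvectorUnitary : Matrix n n ℂ) with hF
  have hfi : ∀ i, (hB.eigenvectorBasis i : n → ℂ) = fun k => F k i := by
    intro i; funext k; rw [hF]; exact (hB.eigenvectorUnitary_apply k i).symm
  have key : ∀ i, dotProduct (star (hB.eigenvectorBasis i : n → ℂ))
      (A *ᵥ (hB.eigenvectorBasis i : n → ℂ)) = (star F * (A * F)) i i := by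
    intro i
    simp only [hfi, Matrix.mul_apply, dotProduct, Matrix.mulVec, Matrix.star_apply,
      Pi.star_apply]
  rw [Finset.sum_congr rfl (fun i _ => key i),
    show ∑ i, (star F * (A * F)) i i = (star F * (A * F)).trace from rfl, ← Matrix.mul_assoc,
    Matrix.trace_mul_comm, ← Matrix.mul_assoc,
    show F * star F = 1 from (Matrix.mem_unitaryGroup_iff).mp hB.eigenvectorUnitary.2,
    Matrix.one_mul]

lemma lemmaA {ρ ω : Matrix n n ℂ} (hρ : IsDensity ρ) (hωpd : ω.PosDef)
    {t : ℝ} (ht : 0 < t)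
    (hq : ∀ x : n → ℂ, t * (dotProduct (star x) (ρ *ᵥ x)).re
        ≤ (dotProduct (star x) (ω *ᵥ x)).re) :
    relEnt ρ ω ≤ - Real.log t := by
  obtain ⟨hρpsd, hρtr⟩ := hρ
  have hρh : ρ.IsHermitian := hρpsd.1
  have hωh : ω.IsHermitian := hωpd.1
  set p : n → ℝ := hρh.eigenvalues with hp
  set lam : n → ℝ := hωh.eigenvalues with hlamdef
  set U := (hρh.eigenvectorUnitary : Matrix n n ℂ) with hU
  set V := (hωh.eigenvectorUnitary : Matrix n n ℂ) with hV
  set W := star U * V with hW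
  set T : n → n → ℝ := fun i j => ‖W i j‖ ^ 2 with hT
  have hp0 : ∀ i, 0 ≤ p i := hρpsd.eigenvalues_nonneg
  have hlam : ∀ j, 0 < lam j := hωpd.eigenvalues_pos
  have hT0 : ∀ i j, 0 ≤ T i j := fun i j => by positivity
  have hTrow : ∀ i, ∑ j, T i j = 1 := fun i => unitary_prod_row_sum hρh hωh i
  have hpsum : ∑ i, p i = 1 := by
    have h := trace_eq_sum_eigenvalues hρh
    rw [hρtr] at h
    exact_mod_cast h.symm
  have step1 : ∀ i, p i ≠ 0 →
      Real.log t + Real.log (p i) ≤ ∑ j, T i j * Real.log (lam j) := by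
    intro i hpi
    have hpi' : 0 < p i := (hp0 i).lt_of_ne (Ne.symm hpi)
    set z : n → ℂ := fun j => star (W i j) / ((lam j : ℝ) : ℂ) with hz
    set x := V *ᵥ z with hx
    set c : ℝ := ∑ j, T i j / lam j with hc
    have hznorm : ∀ j, ‖z j‖ ^ 2 = T i j / (lam j) ^ 2 := by
      intro j
      rw [hz]
      simp only [norm_div, norm_star, Complex.norm_real, Real.norm_eq_abs,
        abs_of_pos (hlam j), div_pow, hT]
    have hsVx : star V *ᵥ x = z := by
      rw [hx, Matrix.mulVec_mulVec,
        show star V * V = 1 from (Matrix.mem_unitaryGroup_iff').mp hωh.eigenvectorUnitary.2,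
        Matrix.one_mulVec]
    have eω : (dotProduct (star x) (ω *ᵥ x)).re = c := by
      rw [quadform_spectral hωh, hc]
      apply Finset.sum_congr rfl
      intro j _
      rw [← hV, hsVx, hznorm j, pow_two]
      have hne := (hlam j).ne'
      field_simp
      ring
    have hsUx : star U *ᵥ x = W *ᵥ z := by
      rw [hx, Matrix.mulVec_mulVec, ← hW]
    have hWzi : (W *ᵥ z) i = ((c : ℝ) : ℂ) := by
      rw [Matrix.mulVec, dotProduct, hc, Complex.ofReal_sum]
      apply Finset.sum_congr rfl
      intro j _
      rw [hz]
      have : W i j * (star (W i j) / ((lam j : ℝ) : ℂ)) =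
          (W i j * star (W i j)) / ((lam j : ℝ) : ℂ) := by ring
      rw [this, Complex.star_def, Complex.mul_conj, Complex.normSq_eq_norm_sq, Complex.ofReal_div, hT]
    have eρ : (dotProduct (star x) (ρ *ᵥ x)).re = ∑ k, p k * ‖(W *ᵥ z) k‖ ^ 2 := by
      rw [quadform_spectral hρh]
      apply Finset.sum_congr rfl
      intro k _
      rw [← hU, hsUx]
    have hcpos : 0 < c := by
      obtain ⟨j, hj⟩ : ∃ j, T i j ≠ 0 := by
        by_contra h
        push_neg at h
        have h1 := hTrow i
        simp only [h, Finset.sum_const_zero] at h1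
        norm_num at h1
      have h2 : 0 < T i j / lam j := div_pos ((hT0 i j).lt_of_ne (Ne.symm hj)) (hlam j)
      calc (0:ℝ) < T i j / lam j := h2
        _ ≤ c := Finset.single_le_sum
            (fun k _ => div_nonneg (hT0 i k) (hlam k).le) (Finset.mem_univ j)
    have eρge : p i * c ^ 2 ≤ (dotProduct (star x) (ρ *ᵥ x)).re := by
      rw [eρ]
      have h1 := Finset.single_le_sum (f := fun k => p k * ‖(W *ᵥ z) k‖ ^ 2)
        (fun k _ => mul_nonneg (hp0 k) (by positivity)) (Finset.mem_univ i)
      simpa [hWzi, Complex.norm_real, Real.norm_eq_abs, sq_abs] using h1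
    have key : t * (p i * c ^ 2) ≤ c :=
      le_trans (mul_le_mul_of_nonneg_left eρge ht.le) (le_of_le_of_eq (hq x) eω)
    have hpc : t * p i * c ≤ 1 := by
      have h2 : (t * p i * c) * c ≤ 1 * c := by
        rw [one_mul]
        calc (t * p i * c) * c = t * (p i * c ^ 2) := by ring
          _ ≤ c := key
      exact le_of_mul_le_mul_right h2 hcpos
    have hcle : c ≤ 1 / (t * p i) := by
      rw [le_div_iff₀ (by positivity)]
      calc c * (t * p i) = t * p i * c := by ring
        _ ≤ 1 := hpc
    have jensen : ∑ j, T i j * Real.log ((lam j)⁻¹) ≤ Real.log (∑ j, T i j * (lam j)⁻¹) :=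
      log_jensen Finset.univ _ _ (fun j _ => hT0 i j)
        (fun j _ => inv_pos.mpr (hlam j)) (hTrow i)
    have hsum_inv : ∑ j, T i j * (lam j)⁻¹ = c := by
      rw [hc]
      exact Finset.sum_congr rfl fun j _ => (div_eq_mul_inv _ _).symm
    have hlogc : Real.log c ≤ -(Real.log t + Real.log (p i)) := by
      have := Real.log_le_log hcpos hcle
      rwa [one_div, Real.log_inv, Real.log_mul ht.ne' hpi] at this
    have hneg : -(∑ j, T i j * Real.log (lam j)) ≤ Real.log c := by
      calc -(∑ j, T i j * Real.log (lam j)) = ∑ j, T i j * Real.log ((lam j)⁻¹) := by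
            rw [← Finset.sum_neg_distrib]
            exact Finset.sum_congr rfl fun j _ => by rw [Real.log_inv]; ring
        _ ≤ Real.log (∑ j, T i j * (lam j)⁻¹) := jensen
        _ = Real.log c := by rw [hsum_inv]
    linarith
  have expand : relEnt ρ ω =
      ∑ i, p i * Real.log (p i) - ∑ i, p i * (∑ j, T i j * Real.log (lam j)) := by
    rw [relEnt, Matrix.mul_sub, Matrix.trace_sub, Complex.sub_re,
      trace_mul_mlog_self hρh, trace_mul_mlog hρh hωh]
    congr 1
    apply Finset.sum_congr rfl
    intro i _
    rw [Finset.mul_sum]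
  have bound : ∑ i, p i * (Real.log t + Real.log (p i))
      ≤ ∑ i, p i * (∑ j, T i j * Real.log (lam j)) := by
    apply Finset.sum_le_sum
    intro i _
    rcases eq_or_ne (p i) 0 with h | h
    · simp [h]
    · exact mul_le_mul_of_nonneg_left (step1 i h) (hp0 i)
  have lhs_eq : ∑ i, p i * (Real.log t + Real.log (p i))
      = Real.log t + ∑ i, p i * Real.log (p i) := by
    simp only [mul_add]
    rw [Finset.sum_add_distrib, ← Finset.sum_mul, hpsum, one_mul]
  linarith [expand, bound]

lemma lemmaB {σ ρ ν ω : Matrix n n ℂ} (hσ : IsDensity σ) (hν : IsDensity ν)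
    (hωpd : ω.PosDef) (horth : ρ * σ = 0) {t : ℝ} (ht : t ∈ Set.Ioo (0:ℝ) 1)
    (hω : ω = t • ρ + (1 - t) • ν) :
    - Real.log (1 - t) ≤ relEnt σ ω := by
  obtain ⟨hσpsd, hσtr⟩ := hσ
  have hσh : σ.IsHermitian := hσpsd.1
  have hωh : ω.IsHermitian := hωpd.1
  set q : n → ℝ := hσh.eigenvalues with hqdef
  set lam : n → ℝ := hωh.eigenvalues with hlamdef
  set F := (hσh.eigenvectorUnitary : Matrix n n ℂ) with hF
  set V := (hωh.eigenvectorUnitary : Matrix n n ℂ) with hV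
  set Z : n → n → ℝ := fun i j => ‖(star F * V) i j‖ ^ 2 with hZ
  set f : n → n → ℂ := fun i => (hσh.eigenvectorBasis i : n → ℂ) with hf
  have hq0 : ∀ i, 0 ≤ q i := hσpsd.eigenvalues_nonneg
  have hlam : ∀ j, 0 < lam j := hωpd.eigenvalues_pos
  have hZ0 : ∀ i j, 0 ≤ Z i j := fun i j => by positivity
  have hZrow : ∀ i, ∑ j, Z i j = 1 := fun i => unitary_prod_row_sum hσh hωh i
  have hqsum : ∑ i, q i = 1 := by
    have h := trace_eq_sum_eigenvalues hσh
    rw [hσtr] at h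
    exact_mod_cast h.symm
  set c : n → ℝ := fun i => (dotProduct (star (f i)) (ω *ᵥ f i)).re with hcdef
  set d : n → ℝ := fun i => (dotProduct (star (f i)) (ν *ᵥ f i)).re with hddef
  have hfF : ∀ i, f i = fun k => F k i := by
    intro i; funext k; rw [hf, hF]; exact (hσh.eigenvectorUnitary_apply k i).symm
  have hcz : ∀ i, c i = ∑ j, Z i j * lam j := by
    intro i
    rw [hcdef]
    simp only []
    rw [quadform_spectral hωh]
    apply Finset.sum_congr rfl
    intro j _
    have h1 : ((star V) *ᵥ f i) j = (star V * F) j i := by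
      rw [hfF i, Matrix.mulVec, dotProduct, Matrix.mul_apply]
    have h2 : (star V * F) j i = star ((star F * V) i j) := by
      simp only [Matrix.mul_apply, Matrix.star_apply, star_sum, star_mul', star_star]
      apply Finset.sum_congr rfl
      intro k _
      ring
    rw [← hV, h1, h2, norm_star]
    ring
  have hrho0 : ∀ i, q i ≠ 0 → ρ *ᵥ f i = 0 := by
    intro i hqi
    have h1 : σ *ᵥ f i = q i • f i := hσh.mulVec_eigenvectorBasis i
    have h2 : ρ *ᵥ (σ *ᵥ f i) = 0 := by
      rw [Matrix.mulVec_mulVec, horth, Matrix.zero_mulVec]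
    rw [h1, Matrix.mulVec_smul] at h2
    exact (smul_eq_zero.mp h2).resolve_left hqi
  have hc_eq : ∀ i, q i ≠ 0 → c i = (1 - t) * d i := by
    intro i hqi
    have h3 : dotProduct (star (f i)) (ω *ᵥ f i)
        = (1 - t) • dotProduct (star (f i)) (ν *ᵥ f i) := by
      rw [hω, Matrix.add_mulVec, Matrix.smul_mulVec, Matrix.smul_mulVec,
        hrho0 i hqi, smul_zero, zero_add, dotProduct_smul]
    rw [hcdef, hddef]
    simp only []
    rw [h3, Complex.smul_re]
    rfl
  have hd0 : ∀ i, 0 ≤ d i := by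
    intro i
    have h := hν.1.dotProduct_mulVec_nonneg (f i)
    have := (Complex.le_def.mp h).1
    simpa using this
  have hdsum : ∑ i, d i = 1 := by
    have h1 := sum_quadform_eigenbasis (A := ν) hσh
    have h2 : ∑ i, d i = (ν.trace).re := by
      rw [← h1, Complex.re_sum]
    rw [h2, hν.2, Complex.one_re]
  have hcpos : ∀ i, 0 < c i := by
    intro i
    have hfne : f i ≠ 0 := by
      intro h
      have h1 := hσh.eigenvectorBasis.orthonormal.ne_zero i
      apply h1
      ext k
      exact congrFun h k
    have h := hωpd.dotProduct_mulVec_pos hfne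
    have := (Complex.lt_def.mp h).1
    simpa using this
  set A := Finset.univ.filter (fun i => q i ≠ 0) with hA
  have hqA : ∑ i ∈ A, q i = 1 := by
    rw [hA, Finset.sum_filter_ne_zero]
    exact hqsum
  have hAne : A.Nonempty := by
    by_contra h
    rw [Finset.not_nonempty_iff_eq_empty] at h
    rw [h, Finset.sum_empty] at hqA
    norm_num at hqA
  have hmemA : ∀ i ∈ A, q i ≠ 0 := fun i hi => (Finset.mem_filter.mp hi).2
  have hqpos : ∀ i ∈ A, 0 < q i := fun i hi => (hq0 i).lt_of_ne (Ne.symm (hmemA i hi))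
  have jensenB : ∑ i ∈ A, q i * Real.log (c i / q i)
      ≤ Real.log (∑ i ∈ A, q i * (c i / q i)) :=
    log_jensen A _ _ (fun i _ => hq0 i)
      (fun i hi => div_pos (hcpos i) (hqpos i hi)) hqA
  have hsimp : ∑ i ∈ A, q i * (c i / q i) = ∑ i ∈ A, c i := by
    apply Finset.sum_congr rfl
    intro i hi
    rw [mul_div_assoc', mul_comm, mul_div_assoc, div_self (hmemA i hi), mul_one]
  have hsumc : ∑ i ∈ A, c i ≤ 1 - t := by
    have h1 : ∑ i ∈ A, c i = (1 - t) * ∑ i ∈ A, d i := by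
      rw [Finset.mul_sum]
      exact Finset.sum_congr rfl fun i hi => hc_eq i (hmemA i hi)
    have h2 : ∑ i ∈ A, d i ≤ 1 := by
      rw [← hdsum]
      exact Finset.sum_le_sum_of_subset_of_nonneg (Finset.subset_univ A)
        (fun i _ _ => hd0 i)
    rw [h1]
    nlinarith [ht.2]
  have hsumcpos : 0 < ∑ i ∈ A, c i := Finset.sum_pos (fun i _ => hcpos i) hAne
  have hlogc : Real.log (∑ i ∈ A, c i) ≤ Real.log (1 - t) :=
    Real.log_le_log hsumcpos hsumc
  have expandB : relEnt σ ω =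
      ∑ i, q i * Real.log (q i) - ∑ i, q i * (∑ j, Z i j * Real.log (lam j)) := by
    rw [relEnt, Matrix.mul_sub, Matrix.trace_sub, Complex.sub_re,
      trace_mul_mlog_self hσh, trace_mul_mlog hσh hωh]
    congr 1
    apply Finset.sum_congr rfl
    intro i _
    rw [Finset.mul_sum]
  have Gbound : ∀ i, ∑ j, Z i j * Real.log (lam j) ≤ Real.log (c i) := by
    intro i
    have := log_jensen Finset.univ (Z i) lam (fun j _ => hZ0 i j) (fun j _ => hlam j) (hZrow i)
    rw [← hcz i] at this
    exact this
  have h5 : ∑ i, q i * (∑ j, Z i j * Real.log (lam j)) ≤ ∑ i, q i * Real.log (c i) := by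
    apply Finset.sum_le_sum
    intro i _
    rcases eq_or_ne (q i) 0 with h | h
    · simp [h]
    · exact mul_le_mul_of_nonneg_left (Gbound i) (hq0 i)
  have h6 : ∑ i, (q i * Real.log (q i) - q i * Real.log (c i))
      = ∑ i ∈ A, (q i * Real.log (q i) - q i * Real.log (c i)) := by
    symm
    apply Finset.sum_subset (Finset.subset_univ A)
    intro i _ hi
    rw [hA, Finset.mem_filter] at hi
    push_neg at hi
    have : q i = 0 := hi (Finset.mem_univ i)
    simp [this]
  have h7 : ∑ i ∈ A, (q i * Real.log (q i) - q i * Real.log (c i))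
      = - ∑ i ∈ A, q i * Real.log (c i / q i) := by
    rw [← Finset.sum_neg_distrib]
    apply Finset.sum_congr rfl
    intro i hi
    rw [Real.log_div (hcpos i).ne' (hmemA i hi)]
    ring
  have final : - Real.log (1 - t) ≤
      ∑ i, q i * Real.log (q i) - ∑ i, q i * Real.log (c i) := by
    have e1 : ∑ i, q i * Real.log (q i) - ∑ i, q i * Real.log (c i)
        = ∑ i, (q i * Real.log (q i) - q i * Real.log (c i)) := by
      rw [Finset.sum_sub_distrib]
    rw [e1, h6, h7]
    have : ∑ i ∈ A, q i * Real.log (c i / q i) ≤ Real.log (1 - t) := by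
      calc ∑ i ∈ A, q i * Real.log (c i / q i)
          ≤ Real.log (∑ i ∈ A, q i * (c i / q i)) := jensenB
        _ = Real.log (∑ i ∈ A, c i) := by rw [hsimp]
        _ ≤ Real.log (1 - t) := hlogc
    linarith
  rw [expandB]
  linarith

end Aux

/-- for `ρ ⊥ σ` and `ω = t ρ + (1-t) ν` positive definite,
`D(ρ‖ω) - D(σ‖ω) ≤ log(1/t - 1)`. -/
theorem relEnt_diff_le {n : Type*} [Fintype n] [DecidableEq n]
    (ρ σ ν ω : Matrix n n ℂ) (hρ : IsDensity ρ) (hσ : IsDensity σ) (hν : IsDensity ν)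
    (horth : ρ * σ = 0) (t : ℝ) (ht : t ∈ Set.Ioo (0 : ℝ) 1)
    (hω : ω = t • ρ + (1 - t) • ν) (hωpd : ω.PosDef) :
    relEnt ρ ω - relEnt σ ω ≤ Real.log (1 / t - 1) := by
  have h1t : (0:ℝ) < 1 - t := by linarith [ht.2]
  have hApre : ∀ x : n → ℂ, t * (dotProduct (star x) (ρ *ᵥ x)).re
      ≤ (dotProduct (star x) (ω *ᵥ x)).re := by
    intro x
    have hν0 : 0 ≤ (dotProduct (star x) (ν *ᵥ x)).re := by
      have := (Complex.le_def.mp (hν.1.dotProduct_mulVec_nonneg x)).1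
      simpa using this
    have hexp : (dotProduct (star x) (ω *ᵥ x)).re
        = t * (dotProduct (star x) (ρ *ᵥ x)).re
          + (1 - t) * (dotProduct (star x) (ν *ᵥ x)).re := by
      rw [hω, Matrix.add_mulVec, Matrix.smul_mulVec, Matrix.smul_mulVec,
        dotProduct_add, dotProduct_smul, dotProduct_smul,
        Complex.add_re, Complex.smul_re, Complex.smul_re]
      rfl
    rw [hexp]
    nlinarith
  have hA := lemmaA hρ hωpd ht.1 hApre
  have hB := lemmaB hσ hν hωpd horth ht hω
  have hlogeq : Real.log (1/t - 1) = Real.log (1 - t) - Real.log t := by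
    rw [show 1/t - 1 = (1-t)/t from by
      rw [eq_div_iff ht.1.ne', sub_mul, one_div, inv_mul_cancel₀ ht.1.ne', one_mul],
      Real.log_div h1t.ne' ht.1.ne']
  linarith
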